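/- Unique solvability of the second-order PFC scheme: for every L > 0, positive integer m (with h = L/m), every 0 < ε < 1, every τ > 0, and every pair of periodic grid functions φᵃ, φᵇ : (ZMod m)³ → ℝ, there exists a unique periodic grid function φᶜ such that (φᵃ, φᵇ, φᶜ) satisfies one step of the second-order scheme. -/

import Mathlib

open Finset Real

/-- The periodic 3D grid with `m` points in each direction. -/
abbrev Grid (m : ℕ) := ZMod m × ZMod m × ZMod m

/-- Forward difference in the `x` direction, with mesh size `h`. -/
noncomputable def Dx {m : ℕ} (h : ℝ) (φ : Grid m → ℝ) (p : Grid m) : ℝ :=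
  (φ (p.1 + 1, p.2.1, p.2.2) - φ p) / h

/-- Forward difference in the `y` direction, with mesh size `h`. -/
noncomputable def Dy {m : ℕ} (h : ℝ) (φ : Grid m → ℝ) (p : Grid m) : ℝ :=
  (φ (p.1, p.2.1 + 1, p.2.2) - φ p) / h

/-- Forward difference in the `z` direction, with mesh size `h`. -/
noncomputable def Dz {m : ℕ} (h : ℝ) (φ : Grid m → ℝ) (p : Grid m) : ℝ :=
  (φ (p.1, p.2.1, p.2.2 + 1) - φ p) / h

/-- The standard 7-point discrete Laplacian with mesh size `h`. -/
noncomputable def lapH {m : ℕ} (h : ℝ) (φ : Grid m → ℝ) (p : Grid m) : ℝ :=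
  (φ (p.1 + 1, p.2.1, p.2.2) + φ (p.1 - 1, p.2.1, p.2.2)
    + φ (p.1, p.2.1 + 1, p.2.2) + φ (p.1, p.2.1 - 1, p.2.2)
    + φ (p.1, p.2.1, p.2.2 + 1) + φ (p.1, p.2.1, p.2.2 - 1)
    - 6 * φ p) / h ^ 2

/-- Discrete `L²` inner product `⟨f, g⟩ = h³ Σ f g`. -/
noncomputable def ip {m : ℕ} [NeZero m] (h : ℝ) (f g : Grid m → ℝ) : ℝ :=
  h ^ 3 * ∑ p : Grid m, f p * g p

/-- Square of the discrete `L²` norm. -/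
noncomputable def norm2sq {m : ℕ} [NeZero m] (h : ℝ) (f : Grid m → ℝ) : ℝ :=
  h ^ 3 * ∑ p : Grid m, (f p) ^ 2

/-- The discrete `L²` norm. -/
noncomputable def norm2 {m : ℕ} [NeZero m] (h : ℝ) (f : Grid m → ℝ) : ℝ :=
  Real.sqrt (norm2sq h f)

/-- Fourth power of the discrete `L⁴` norm. -/
noncomputable def norm4p4 {m : ℕ} [NeZero m] (h : ℝ) (f : Grid m → ℝ) : ℝ :=
  h ^ 3 * ∑ p : Grid m, (f p) ^ 4

/-- Square of the discrete gradient norm `‖∇_h f‖₂²`. -/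
noncomputable def gradsq {m : ℕ} [NeZero m] (h : ℝ) (f : Grid m → ℝ) : ℝ :=
  h ^ 3 * ∑ p : Grid m, ((Dx h f p) ^ 2 + (Dy h f p) ^ 2 + (Dz h f p) ^ 2)

/-- Square of the discrete `H²` norm `‖f‖_{2,2}²`. -/
noncomputable def h22sq {m : ℕ} [NeZero m] (h : ℝ) (f : Grid m → ℝ) : ℝ :=
  norm2sq h f + gradsq h f + norm2sq h (lapH h f)

/-- The discrete maximum norm `‖f‖_∞`. -/
noncomputable def normInf {m : ℕ} [NeZero m] (f : Grid m → ℝ) : ℝ :=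
  ⨆ p : Grid m, |f p|

/-- The discrete PFC energy `F_h`. -/
noncomputable def Fh {m : ℕ} [NeZero m] (h ε : ℝ) (φ : Grid m → ℝ) : ℝ :=
  (1 / 4) * norm4p4 h φ + ((1 - ε) / 2) * norm2sq h φ - gradsq h φ
    + (1 / 2) * norm2sq h (lapH h φ)

/-- The discrete chemical potential `μ^{κ+1/2}` of the second-order scheme, built from
`a = φ^{κ-1}`, `b = φ^κ`, `c = φ^{κ+1}`. -/
noncomputable def mu {m : ℕ} (h ε : ℝ) (a b c : Grid m → ℝ) : Grid m → ℝ :=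
  fun p =>
    (1 / 2) * (c p + b p) * ((1 / 2) * ((c p) ^ 2 + (b p) ^ 2))
      + (1 - ε) * ((1 / 2) * (c p + b p))
      + 3 * lapH h b p - lapH h a p
      + lapH h (fun q => (1 / 2) * lapH h (fun r => c r + b r) q) p

/-- One step of the second-order PFC scheme:
`(φ^{κ+1} - φ^κ)/τ = Δ_h μ^{κ+1/2}` with `a = φ^{κ-1}`, `b = φ^κ`, `c = φ^{κ+1}`. -/
def SchemeStep {m : ℕ} (h τ ε : ℝ) (a b c : Grid m → ℝ) : Prop :=
  ∀ p : Grid m, (c p - b p) / τ = lapH h (mu h ε a b c) p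

section Shifts
set_option linter.unusedSectionVars false
variable {m : ℕ} [NeZero m]

def ex : Grid m ≃ Grid m := (Equiv.addRight (1:ZMod m)).prodCongr (Equiv.refl _)
def ey : Grid m ≃ Grid m := (Equiv.refl _).prodCongr ((Equiv.addRight (1:ZMod m)).prodCongr (Equiv.refl _))
def ez : Grid m ≃ Grid m := (Equiv.refl _).prodCongr ((Equiv.refl _).prodCongr (Equiv.addRight (1:ZMod m)))

lemma ex_apply (p : Grid m) : ex p = (p.1 + 1, p.2.1, p.2.2) := rfl
lemma ey_apply (p : Grid m) : ey p = (p.1, p.2.1 + 1, p.2.2) := rfl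
lemma ez_apply (p : Grid m) : ez p = (p.1, p.2.1, p.2.2 + 1) := rfl
lemma ex_symm_apply (p : Grid m) : ex.symm p = (p.1 - 1, p.2.1, p.2.2) := by
  show (p.1 + -1, p.2.1, p.2.2) = _ ; rw [sub_eq_add_neg]
lemma ey_symm_apply (p : Grid m) : ey.symm p = (p.1, p.2.1 - 1, p.2.2) := by
  show (p.1, p.2.1 + -1, p.2.2) = _ ; rw [sub_eq_add_neg]
lemma ez_symm_apply (p : Grid m) : ez.symm p = (p.1, p.2.1, p.2.2 - 1) := by
  show (p.1, p.2.1, p.2.2 + -1) = _ ; rw [sub_eq_add_neg]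

lemma sum_shift (e : Grid m ≃ Grid m) (F : Grid m → ℝ) :
    ∑ p : Grid m, F (e p) = ∑ p : Grid m, F p := Equiv.sum_comp e F

lemma sum_move (e : Grid m ≃ Grid m) (f g : Grid m → ℝ) :
    ∑ p : Grid m, f (e p) * g p = ∑ p : Grid m, f p * g (e.symm p) := by
  apply Fintype.sum_equiv e <;> intro x <;> simp

lemma sum_pair (e : Grid m ≃ Grid m) (f g : Grid m → ℝ) :
    ∑ p : Grid m, (f (e p) * g p + f (e.symm p) * g p)
      = ∑ p : Grid m, (f p * g (e p) + f p * g (e.symm p)) := by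
  rw [Finset.sum_add_distrib, Finset.sum_add_distrib, sum_move e f g,
    sum_move e.symm f g]
  simp [add_comm]

lemma lapH_expand (h : ℝ) (f : Grid m → ℝ) (p : Grid m) :
    lapH h f p = (f (ex p) + f (ex.symm p) + f (ey p) + f (ey.symm p)
      + f (ez p) + f (ez.symm p) - 6 * f p) / h ^ 2 := by
  rw [lapH, ex_apply, ex_symm_apply, ey_apply, ey_symm_apply, ez_apply, ez_symm_apply]

lemma lap_selfadj (h : ℝ) (f g : Grid m → ℝ) :
    ∑ p : Grid m, lapH h f p * g p = ∑ p : Grid m, f p * lapH h g p := by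
  have L : ∀ p : Grid m, lapH h f p * g p =
      ((f (ex p) * g p + f (ex.symm p) * g p) + (f (ey p) * g p + f (ey.symm p) * g p)
        + (f (ez p) * g p + f (ez.symm p) * g p) - 6 * (f p * g p)) / h ^ 2 := by
    intro p; rw [lapH_expand]; ring
  have R : ∀ p : Grid m, f p * lapH h g p =
      ((f p * g (ex p) + f p * g (ex.symm p)) + (f p * g (ey p) + f p * g (ey.symm p))
        + (f p * g (ez p) + f p * g (ez.symm p)) - 6 * (f p * g p)) / h ^ 2 := by
    intro p; rw [lapH_expand]; ring
  rw [Finset.sum_congr rfl (fun p _ => L p), Finset.sum_congr rfl (fun p _ => R p),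
    ← Finset.sum_div, ← Finset.sum_div]
  congr 1
  simp only [Finset.sum_add_distrib, Finset.sum_sub_distrib]
  rw [sum_move ex f g, sum_move ex.symm f g, sum_move ey f g, sum_move ey.symm f g,
    sum_move ez f g, sum_move ez.symm f g]
  simp only [Equiv.symm_symm]
  ring

lemma sum_lap (h : ℝ) (f : Grid m → ℝ) : ∑ p : Grid m, lapH h f p = 0 := by
  have := lap_selfadj h f (fun _ => 1)
  simpa [lapH, show (1:ℝ)+1+1+1+1+1-6 = 0 by norm_num] using this

end Shifts
section Grad
set_option linter.unusedSectionVars false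
variable {m : ℕ} [NeZero m]

lemma gradsum_eq (h : ℝ) (f g : Grid m → ℝ) :
    ∑ p : Grid m, (Dx h f p * Dx h g p + Dy h f p * Dy h g p + Dz h f p * Dz h g p)
      = - ∑ p : Grid m, lapH h f p * g p := by
  have L : ∀ p : Grid m, Dx h f p * Dx h g p + Dy h f p * Dy h g p + Dz h f p * Dz h g p
      = ((f (ex p) * g (ex p) - f (ex p) * g p - f p * g (ex p) + f p * g p)
        + (f (ey p) * g (ey p) - f (ey p) * g p - f p * g (ey p) + f p * g p)
        + (f (ez p) * g (ez p) - f (ez p) * g p - f p * g (ez p) + f p * g p)) / h ^ 2 := by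
    intro p
    simp only [Dx, Dy, Dz, ← ex_apply, ← ey_apply, ← ez_apply]
    ring
  have R : ∀ p : Grid m, lapH h f p * g p
      = ((f (ex p) * g p + f (ex.symm p) * g p) + (f (ey p) * g p + f (ey.symm p) * g p)
        + (f (ez p) * g p + f (ez.symm p) * g p) - 6 * (f p * g p)) / h ^ 2 := by
    intro p; rw [lapH_expand]; ring
  rw [Finset.sum_congr rfl (fun p _ => L p), Finset.sum_congr rfl (fun p _ => R p),
    ← Finset.sum_div, ← Finset.sum_div, ← neg_div]
  congr 1
  have Sx : ∑ p : Grid m, f (ex p) * g (ex p) = ∑ p : Grid m, f p * g p :=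
    sum_shift ex (fun p => f p * g p)
  have Sy : ∑ p : Grid m, f (ey p) * g (ey p) = ∑ p : Grid m, f p * g p :=
    sum_shift ey (fun p => f p * g p)
  have Sz : ∑ p : Grid m, f (ez p) * g (ez p) = ∑ p : Grid m, f p * g p :=
    sum_shift ez (fun p => f p * g p)
  have Mx : ∑ p : Grid m, f (ex.symm p) * g p = ∑ p : Grid m, f p * g (ex p) := by
    simpa using sum_move ex.symm f g
  have My : ∑ p : Grid m, f (ey.symm p) * g p = ∑ p : Grid m, f p * g (ey p) := by
    simpa using sum_move ey.symm f g
  have Mz : ∑ p : Grid m, f (ez.symm p) * g p = ∑ p : Grid m, f p * g (ez p) := by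
    simpa using sum_move ez.symm f g
  have C6 : ∑ p : Grid m, (6:ℝ) * (f p * g p) = 6 * ∑ p : Grid m, f p * g p :=
    (Finset.mul_sum _ _ _).symm
  simp only [Finset.sum_add_distrib, Finset.sum_sub_distrib, neg_sub]
  rw [Sx, Sy, Sz, Mx, My, Mz, C6]
  ring

lemma lap_neg (h : ℝ) (f : Grid m → ℝ) : ∑ p : Grid m, lapH h f p * f p ≤ 0 := by
  have := gradsum_eq h f f
  have hn : (0:ℝ) ≤ ∑ p : Grid m, (Dx h f p * Dx h f p + Dy h f p * Dy h f p + Dz h f p * Dz h f p) :=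
    Finset.sum_nonneg (fun p _ => by nlinarith [sq_nonneg (Dx h f p), sq_nonneg (Dy h f p), sq_nonneg (Dz h f p)])
  linarith

lemma lap_lap_sq (h : ℝ) (f : Grid m → ℝ) :
    ∑ p : Grid m, f p * lapH h (lapH h f) p = ∑ p : Grid m, (lapH h f p) ^ 2 := by
  have := lap_selfadj h (lapH h f) f
  calc ∑ p : Grid m, f p * lapH h (lapH h f) p
      = ∑ p : Grid m, lapH h (lapH h f) p * f p := by
        exact Finset.sum_congr rfl (fun p _ => mul_comm _ _)
    _ = ∑ p : Grid m, lapH h f p * lapH h f p := this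
    _ = ∑ p : Grid m, (lapH h f p) ^ 2 := by
        exact Finset.sum_congr rfl (fun p _ => (sq (lapH h f p)).symm)

end Grad
-- uniqueness section, appended to pre+lemmas1
section Uniq
set_option linter.unusedSectionVars false
variable {m : ℕ} [NeZero m]

lemma lapH_lin (h s : ℝ) (f g : Grid m → ℝ) (p : Grid m) :
    lapH h (fun q => f q + s * g q) p = lapH h f p + s * lapH h g p := by
  simp only [lapH]; ring

lemma lapH_sub (h : ℝ) (f g : Grid m → ℝ) (p : Grid m) :
    lapH h (fun q => f q - g q) p = lapH h f p - lapH h g p := by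
  simp only [lapH]; ring

lemma lapH_smul (h s : ℝ) (f : Grid m → ℝ) (p : Grid m) :
    lapH h (fun q => s * f q) p = s * lapH h f p := by
  simp only [lapH]; ring

lemma mu_sub (h ε : ℝ) (a b c₁ c₂ : Grid m → ℝ) (p : Grid m) :
    mu h ε a b c₁ p - mu h ε a b c₂ p =
      (1/4) * (c₁ p ^ 3 + b p * c₁ p ^ 2 + b p ^ 2 * c₁ p
        - (c₂ p ^ 3 + b p * c₂ p ^ 2 + b p ^ 2 * c₂ p))
      + ((1 - ε)/2) * (c₁ p - c₂ p)
      + (1/2) * lapH h (lapH h (fun q => c₁ q - c₂ q)) p := by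
  have h1 : ∀ p : Grid m, lapH h (fun q => (1/2) * lapH h (fun r => c₁ r + b r) q) p
      - lapH h (fun q => (1/2) * lapH h (fun r => c₂ r + b r) q) p
      = (1/2) * lapH h (lapH h (fun q => c₁ q - c₂ q)) p := by
    intro p
    rw [← lapH_sub]
    have : (fun q => (1/2) * lapH h (fun r => c₁ r + b r) q
        - (1/2) * lapH h (fun r => c₂ r + b r) q)
        = fun q => (1/2) * lapH h (fun q => c₁ q - c₂ q) q := by
      funext q
      rw [← mul_sub, ← lapH_sub]
      congr 2
      funext r; ring
    rw [this, lapH_smul]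
  have := h1 p
  simp only [mu]
  nlinarith [this]


lemma scheme_unique (h τ ε : ℝ) (hτ : 0 < τ) (hε1 : ε < 1) (a b c₁ c₂ : Grid m → ℝ)
    (H1 : SchemeStep h τ ε a b c₁) (H2 : SchemeStep h τ ε a b c₂) : c₁ = c₂ := by
  set w : Grid m → ℝ := fun p => c₁ p - c₂ p with hw
  set D : Grid m → ℝ := fun p => mu h ε a b c₁ p - mu h ε a b c₂ p with hD
  have hwD : ∀ p : Grid m, w p = τ * lapH h D p := by
    intro p
    have e1 := H1 p
    have e2 := H2 p
    have hL : lapH h D p = lapH h (mu h ε a b c₁) p - lapH h (mu h ε a b c₂) p :=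
      lapH_sub h _ _ p
    have : w p / τ = lapH h D p := by
      rw [hL, ← e1, ← e2]; simp only [hw]; ring
    field_simp at this
    linarith [this]
  have S1 : ∑ p : Grid m, w p * D p = τ * ∑ p : Grid m, lapH h D p * D p := by
    rw [Finset.mul_sum]
    exact Finset.sum_congr rfl (fun p _ => by rw [hwD p]; ring)
  have S2 : ∑ p : Grid m, w p * D p ≤ 0 := by
    have := lap_neg h D
    nlinarith [S1]
  have decomp : ∑ p : Grid m, w p * D p
      = ∑ p : Grid m, w p * ((1/4) * (c₁ p ^ 3 + b p * c₁ p ^ 2 + b p ^ 2 * c₁ p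
          - (c₂ p ^ 3 + b p * c₂ p ^ 2 + b p ^ 2 * c₂ p)))
        + ((1 - ε)/2) * ∑ p : Grid m, w p ^ 2
        + (1/2) * ∑ p : Grid m, w p * lapH h (lapH h w) p := by
    rw [Finset.mul_sum, Finset.mul_sum, ← Finset.sum_add_distrib, ← Finset.sum_add_distrib]
    refine Finset.sum_congr rfl (fun p _ => ?_)
    have := mu_sub h ε a b c₁ c₂ p
    have hDp : D p = mu h ε a b c₁ p - mu h ε a b c₂ p := rfl
    have hwp : w p = c₁ p - c₂ p := rfl
    rw [hDp, this]
    ring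
  have T1 : (0:ℝ) ≤ ∑ p : Grid m, w p * ((1/4) * (c₁ p ^ 3 + b p * c₁ p ^ 2 + b p ^ 2 * c₁ p
      - (c₂ p ^ 3 + b p * c₂ p ^ 2 + b p ^ 2 * c₂ p))) := by
    refine Finset.sum_nonneg (fun p _ => ?_)
    have hwp : w p = c₁ p - c₂ p := rfl
    rw [hwp]
    nlinarith [sq_nonneg ((c₁ p - c₂ p) * (c₁ p + b p)), sq_nonneg ((c₁ p - c₂ p) * (c₂ p + b p)),
      sq_nonneg ((c₁ p - c₂ p) * (c₁ p + c₂ p))]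
  have T3 : (0:ℝ) ≤ ∑ p : Grid m, w p * lapH h (lapH h w) p := by
    rw [lap_lap_sq h w]
    exact Finset.sum_nonneg (fun p _ => sq_nonneg _)
  have wsq : ∑ p : Grid m, w p ^ 2 ≤ 0 := by nlinarith [S2, decomp, T1, T3]
  have wzero : ∀ p : Grid m, w p = 0 := by
    intro p
    have hall := (Finset.sum_eq_zero_iff_of_nonneg
      (fun q (_ : q ∈ Finset.univ) => sq_nonneg (w q))).1
      (le_antisymm wsq (Finset.sum_nonneg (fun q _ => sq_nonneg (w q))))
    exact pow_eq_zero_iff (n := 2) (by norm_num) |>.1 (hall p (Finset.mem_univ p))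
  funext p
  have := wzero p
  simp only [hw] at this
  linarith [this]

end Uniq
section Aux
set_option linter.unusedSectionVars false

lemma coeff_neg_aux (A B C D : ℝ) (hA : A < 0)
    (H : ∀ t : ℝ, 0 ≤ A*t + B*t^2 + C*t^3 + D*t^4) : False := by
  obtain ⟨M, hM⟩ : ∃ M : ℝ, M = |B| + |C| + |D| + 1 := ⟨_, rfl⟩
  have hM0 : 0 < M := by rw [hM]; positivity
  obtain ⟨t, ht⟩ : ∃ t : ℝ, t = min 1 ((-A)/(2*M)) := ⟨_, rfl⟩
  have ht0 : 0 < t := by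
    rw [ht]; exact lt_min one_pos (div_pos (by linarith) (by linarith))
  have ht1 : t ≤ 1 := by rw [ht]; exact min_le_left _ _
  have ht2 : M * t ≤ -A/2 := by
    have h1 : t ≤ (-A)/(2*M) := by rw [ht]; exact min_le_right _ _
    calc M * t ≤ M * ((-A)/(2*M)) := by nlinarith
      _ = -A/2 := by field_simp
  have ht32 : t^3 ≤ t^2 := by nlinarith
  have ht42 : t^4 ≤ t^2 := by nlinarith
  have hB : B*t^2 ≤ |B| * t^2 := by nlinarith [le_abs_self B, sq_nonneg t]
  have hC : C*t^3 ≤ |C| * t^2 := by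
    calc C*t^3 ≤ |C| * t^3 := by nlinarith [le_abs_self C, pow_pos ht0 3]
      _ ≤ |C| * t^2 := mul_le_mul_of_nonneg_left ht32 (abs_nonneg C)
  have hD : D*t^4 ≤ |D| * t^2 := by
    calc D*t^4 ≤ |D| * t^4 := by nlinarith [le_abs_self D, pow_pos ht0 4]
      _ ≤ |D| * t^2 := mul_le_mul_of_nonneg_left ht42 (abs_nonneg D)
  have habs : |B| * t^2 + |C| * t^2 + |D| * t^2 = (M - 1) * t^2 := by rw [hM]; ring
  have key : M * t * t ≤ (-A/2) * t := mul_le_mul_of_nonneg_right ht2 ht0.le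
  have := H t
  nlinarith [this, hB, hC, hD, key, sq_nonneg t, habs]

lemma coeff_eq_zero (A B C D : ℝ)
    (H : ∀ t : ℝ, 0 ≤ A*t + B*t^2 + C*t^3 + D*t^4) : A = 0 := by
  rcases lt_trichotomy A 0 with hA | hA | hA
  · exact absurd (coeff_neg_aux A B C D hA H) (by simp)
  · exact hA
  · exfalso
    apply coeff_neg_aux (-A) B (-C) D (by linarith)
    intro t
    have := H (-t)
    nlinarith [this]

lemma quartic_lb (B G D : ℝ) : ∃ C : ℝ, ∀ x : ℝ, -C ≤ x^4/16 + B*x^3 + G*x^2 + D*x := by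
  obtain ⟨M, hM⟩ : ∃ M : ℝ, M = |B| + |G| + |D| + 1 := ⟨_, rfl⟩
  have hM1 : 1 ≤ M := by rw [hM]; linarith [abs_nonneg B, abs_nonneg G, abs_nonneg D]
  obtain ⟨R, hR⟩ : ∃ R : ℝ, R = 48*M + 4 := ⟨_, rfl⟩
  have hR0 : (1:ℝ) ≤ R := by rw [hR]; linarith
  refine ⟨3*M*R^3, fun x => ?_⟩
  have habs : x^4 = |x|^4 := by rw [← abs_pow]; exact (abs_of_nonneg (by positivity)).symm
  have hBa : |B| ≤ M := by rw [hM]; linarith [abs_nonneg G, abs_nonneg D]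
  have hGa : |G| ≤ M := by rw [hM]; linarith [abs_nonneg B, abs_nonneg D]
  have hDa : |D| ≤ M := by rw [hM]; linarith [abs_nonneg B, abs_nonneg G]
  have bB : -(M * |x|^3) ≤ B*x^3 := by
    have h1 : |B*x^3| ≤ M * |x|^3 := by
      rw [abs_mul, abs_pow]
      exact mul_le_mul_of_nonneg_right hBa (by positivity)
    linarith [neg_abs_le (B*x^3)]
  have bG : -(M * |x|^2) ≤ G*x^2 := by
    have h1 : |G*x^2| ≤ M * |x|^2 := by
      rw [abs_mul, abs_pow]
      exact mul_le_mul_of_nonneg_right hGa (by positivity)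
    linarith [neg_abs_le (G*x^2)]
  have bD : -(M * |x|) ≤ D*x := by
    have h1 : |D*x| ≤ M * |x| := by
      rw [abs_mul]
      exact mul_le_mul_of_nonneg_right hDa (abs_nonneg x)
    linarith [neg_abs_le (D*x)]
  have hMpos : (0:ℝ) ≤ M := by linarith
  rcases le_or_gt |x| R with hx | hx
  · have e3 : |x|^3 ≤ R^3 := pow_le_pow_left₀ (abs_nonneg x) hx 3
    have e2 : |x|^2 ≤ R^2 := pow_le_pow_left₀ (abs_nonneg x) hx 2
    have hMR : M * |x|^3 ≤ M * R^3 := mul_le_mul_of_nonneg_left e3 hMpos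
    have hMR2 : M * |x|^2 ≤ M * R^2 := mul_le_mul_of_nonneg_left e2 hMpos
    have hMR1 : M * |x| ≤ M * R := mul_le_mul_of_nonneg_left hx hMpos
    have hRR : R^2 ≤ R^3 := by nlinarith
    have hRR1 : R ≤ R^3 := by nlinarith
    have hx4 : 0 ≤ x^4 := by positivity
    nlinarith [hMR, hMR2, hMR1, mul_le_mul_of_nonneg_left hRR hMpos,
      mul_le_mul_of_nonneg_left hRR1 hMpos]
  · have hx1 : 1 ≤ |x| := le_trans hR0 hx.le
    have e43 : R * |x|^3 ≤ |x|^4 := by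
      calc R * |x|^3 ≤ |x| * |x|^3 := mul_le_mul_of_nonneg_right hx.le (by positivity)
        _ = |x|^4 := by ring
    rw [hR] at e43
    have e32 : |x|^2 ≤ |x|^3 := by nlinarith
    have e21 : |x| ≤ |x|^2 := by nlinarith
    have m32 : M * |x|^2 ≤ M * |x|^3 := mul_le_mul_of_nonneg_left e32 hMpos
    have m21 : M * |x| ≤ M * |x|^2 := mul_le_mul_of_nonneg_left e21 hMpos
    have hnn : (0:ℝ) ≤ x^4/16 + B*x^3 + G*x^2 + D*x := by
      nlinarith [e43, m32, m21, bB, bG, bD, habs]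
    have hR3 : (0:ℝ) ≤ R^3 := pow_nonneg (by linarith) 3
    nlinarith [hR3, hnn]

lemma zmod_const {m : ℕ} [NeZero m] (g : ZMod m → ℝ) (H : ∀ x, g (x+1) = g x) :
    ∀ x, g x = g 0 := by
  have hn : ∀ n : ℕ, g (n : ZMod m) = g 0 := by
    intro n
    induction n with
    | zero => simp
    | succ k ih => push_cast; rw [H (k : ZMod m)]; exact ih
  intro x
  have := hn x.val
  rwa [ZMod.natCast_rightInverse x] at this

end Aux
section Poin
set_option linter.unusedSectionVars false
variable {m : ℕ} [NeZero m]

lemma const_of_grad_zero (h : ℝ) (hh : h ≠ 0) (f : Grid m → ℝ)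
    (Hx : ∀ p : Grid m, Dx h f p = 0) (Hy : ∀ p : Grid m, Dy h f p = 0)
    (Hz : ∀ p : Grid m, Dz h f p = 0) : ∀ p : Grid m, f p = f (0, 0, 0) := by
  have hx' : ∀ p : Grid m, f (p.1 + 1, p.2.1, p.2.2) = f p := by
    intro p
    have := Hx p
    rw [Dx, div_eq_zero_iff] at this
    rcases this with hc | hc
    · linarith
    · exact absurd hc hh
  have hy' : ∀ p : Grid m, f (p.1, p.2.1 + 1, p.2.2) = f p := by
    intro p
    have := Hy p
    rw [Dy, div_eq_zero_iff] at this
    rcases this with hc | hc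
    · linarith
    · exact absurd hc hh
  have hz' : ∀ p : Grid m, f (p.1, p.2.1, p.2.2 + 1) = f p := by
    intro p
    have := Hz p
    rw [Dz, div_eq_zero_iff] at this
    rcases this with hc | hc
    · linarith
    · exact absurd hc hh
  rintro ⟨i, j, k⟩
  have s1 : f (i, j, k) = f (0, j, k) :=
    zmod_const (fun x => f (x, j, k)) (fun x => hx' (x, j, k)) i
  have s2 : f (0, j, k) = f (0, 0, k) :=
    zmod_const (fun y => f (0, y, k)) (fun y => hy' (0, y, k)) j
  have s3 : f (0, 0, k) = f (0, 0, 0) :=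
    zmod_const (fun z => f (0, 0, z)) (fun z => hz' (0, 0, z)) k
  rw [s1, s2, s3]

lemma zero_of_const_mean_zero (f : Grid m → ℝ) (hc : ∀ p : Grid m, f p = f (0,0,0))
    (hs : ∑ p : Grid m, f p = 0) : f = 0 := by
  have : ∑ p : Grid m, f p = (Fintype.card (Grid m) : ℝ) * f (0,0,0) := by
    rw [Finset.sum_congr rfl (fun p _ => hc p)]
    simp [Finset.sum_const, Finset.card_univ, nsmul_eq_mul]
  rw [this] at hs
  have hcard : (0:ℝ) < (Fintype.card (Grid m) : ℝ) := by
    have : 0 < Fintype.card (Grid m) := Fintype.card_pos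
    exact_mod_cast this
  have h0 : f (0,0,0) = 0 := by
    rcases mul_eq_zero.1 hs with hc' | hc'
    · linarith
    · exact hc'
  funext p
  rw [hc p, h0]; rfl

lemma cont_Dsum (h : ℝ) :
    Continuous (fun f : Grid m → ℝ =>
      ∑ p : Grid m, ((Dx h f p)^2 + (Dy h f p)^2 + (Dz h f p)^2)) := by
  apply continuous_finset_sum
  intro p _
  simp only [Dx, Dy, Dz]
  fun_prop

lemma grad_smul (h s : ℝ) (f : Grid m → ℝ) :
    ∑ p : Grid m, ((Dx h (s • f) p)^2 + (Dy h (s • f) p)^2 + (Dz h (s • f) p)^2)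
      = s^2 * ∑ p : Grid m, ((Dx h f p)^2 + (Dy h f p)^2 + (Dz h f p)^2) := by
  rw [Finset.mul_sum]
  refine Finset.sum_congr rfl (fun p _ => ?_)
  simp only [Dx, Dy, Dz, Pi.smul_apply, smul_eq_mul]
  ring

lemma poincare (h : ℝ) (hh : h ≠ 0) :
    ∃ lam : ℝ, 0 < lam ∧ ∀ f : Grid m → ℝ, (∑ p : Grid m, f p = 0) →
      lam * ‖f‖^2 ≤ ∑ p : Grid m, ((Dx h f p)^2 + (Dy h f p)^2 + (Dz h f p)^2) := by
  classical
  set q : (Grid m → ℝ) → ℝ :=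
    fun f => ∑ p : Grid m, ((Dx h f p)^2 + (Dy h f p)^2 + (Dz h f p)^2) with hq
  have hq0 : ∀ f, 0 ≤ q f := fun f => Finset.sum_nonneg (fun p _ => by positivity)
  have hqzero : ∀ f : Grid m → ℝ, (∑ p : Grid m, f p = 0) → q f = 0 → f = 0 := by
    intro f hf hqf
    have hterm : ∀ p : Grid m, ((Dx h f p)^2 + (Dy h f p)^2 + (Dz h f p)^2) = 0 := by
      intro p
      have := (Finset.sum_eq_zero_iff_of_nonneg
        (fun p (_ : p ∈ Finset.univ) => by positivity)).1 hqf p (Finset.mem_univ p)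
      exact this
    have hx : ∀ p : Grid m, Dx h f p = 0 := by
      intro p; have := hterm p; nlinarith [sq_nonneg (Dx h f p), sq_nonneg (Dy h f p), sq_nonneg (Dz h f p)]
    have hy : ∀ p : Grid m, Dy h f p = 0 := by
      intro p; have := hterm p; nlinarith [sq_nonneg (Dx h f p), sq_nonneg (Dy h f p), sq_nonneg (Dz h f p)]
    have hz : ∀ p : Grid m, Dz h f p = 0 := by
      intro p; have := hterm p; nlinarith [sq_nonneg (Dx h f p), sq_nonneg (Dy h f p), sq_nonneg (Dz h f p)]
    exact zero_of_const_mean_zero f (const_of_grad_zero h hh f hx hy hz) hf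
  set Sph : Set (Grid m → ℝ) := {f | (∑ p : Grid m, f p = 0) ∧ ‖f‖ = 1} with hSph
  by_cases hne : Sph.Nonempty
  · have hclosed : IsClosed Sph := by
      apply IsClosed.inter
      · exact isClosed_eq (continuous_finset_sum _ (fun p _ => continuous_apply p)) continuous_const
      · exact isClosed_eq continuous_norm continuous_const
    have hcpt : IsCompact Sph := by
      apply IsCompact.of_isClosed_subset (isCompact_closedBall (0 : Grid m → ℝ) 1) hclosed
      intro f hf
      simp only [Metric.mem_closedBall, dist_zero_right]
      exact le_of_eq hf.2
    obtain ⟨u0, hu0, hmin⟩ := hcpt.exists_isMinOn hne (cont_Dsum h).continuousOn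
    refine ⟨q u0, ?_, ?_⟩
    · rcases (hq0 u0).lt_or_eq with hlt | heq
      · exact hlt
      · exfalso
        have h2 := hu0.2
        rw [hqzero u0 hu0.1 heq.symm] at h2
        simp at h2
    · intro f hf
      by_cases hf0 : f = 0
      · subst hf0
        simp only [norm_zero]
        have : q (0 : Grid m → ℝ) ≥ 0 := hq0 0
        simpa using this
      · have hnf : 0 < ‖f‖ := norm_pos_iff.2 hf0
        set u : Grid m → ℝ := ‖f‖⁻¹ • f with hu
        have husum : ∑ p : Grid m, u p = 0 := by
          simp only [hu, Pi.smul_apply, smul_eq_mul, ← Finset.mul_sum, hf, mul_zero]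
        have hunorm : ‖u‖ = 1 := by
          rw [hu, norm_smul, norm_inv, norm_norm]
          field_simp
        have hmem : u ∈ Sph := ⟨husum, hunorm⟩
        have hle : q u0 ≤ q u := hmin hmem
        have hqu : q u = (‖f‖⁻¹)^2 * q f := grad_smul h (‖f‖⁻¹) f
        rw [hqu] at hle
        have h2 : q u0 * ‖f‖^2 ≤ (‖f‖⁻¹)^2 * q f * ‖f‖^2 :=
          mul_le_mul_of_nonneg_right hle (by positivity)
        have h3 : (‖f‖⁻¹)^2 * q f * ‖f‖^2 = q f := by
          field_simp
        linarith [h2, h3.symm.le, h3]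
  · refine ⟨1, one_pos, fun f hf => ?_⟩
    have hf0 : f = 0 := by
      by_contra hne0
      have hnf : 0 < ‖f‖ := norm_pos_iff.2 hne0
      apply hne
      refine ⟨‖f‖⁻¹ • f, ?_, ?_⟩
      · simp only [Pi.smul_apply, smul_eq_mul, ← Finset.mul_sum, hf, mul_zero]
      · rw [norm_smul, norm_inv, norm_norm]; field_simp
    subst hf0
    simp only [norm_zero]
    have : (0:ℝ) ≤ q 0 := hq0 0
    simpa using this

end Poin
section Exist
set_option linter.unusedSectionVars false
set_option maxHeartbeats 1000000
variable {m : ℕ} [NeZero m]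

/-- The variational functional for the second-order scheme. -/
noncomputable def Kfun (h τ ε : ℝ) (a b : Grid m → ℝ) (ψ : Grid m → ℝ) : ℝ :=
  ∑ p : Grid m,
    ((b p + τ * lapH h ψ p)^4/16 + b p * (b p + τ * lapH h ψ p)^3/12
      + (b p)^2 * (b p + τ * lapH h ψ p)^2/8 + (b p)^3 * (b p + τ * lapH h ψ p)/4
      + (1-ε) * ((b p + τ * lapH h ψ p)^2/4 + b p * (b p + τ * lapH h ψ p)/2)
      + (1/4) * (lapH h (fun q => (b q + τ * lapH h ψ q) + b q) p)^2
      + (3 * lapH h b p - lapH h a p) * (b p + τ * lapH h ψ p)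
      + (τ/2) * ((Dx h ψ p)^2 + (Dy h ψ p)^2 + (Dz h ψ p)^2))

lemma Kfun_continuous (h τ ε : ℝ) (a b : Grid m → ℝ) :
    Continuous (Kfun (m := m) h τ ε a b) := by
  apply continuous_finset_sum
  intro p _
  simp only [lapH, Dx, Dy, Dz]
  fun_prop

lemma sum_quartic_poly (f0 f1 f2 f3 f4 : Grid m → ℝ) (F : ℝ → Grid m → ℝ)
    (hF : ∀ t p, F t p = f0 p + t * f1 p + t^2 * f2 p + t^3 * f3 p + t^4 * f4 p) :
    ∀ t : ℝ, ∑ p : Grid m, F t p = ∑ p : Grid m, f0 p + t * ∑ p : Grid m, f1 p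
      + t^2 * ∑ p : Grid m, f2 p + t^3 * ∑ p : Grid m, f3 p + t^4 * ∑ p : Grid m, f4 p := by
  intro t
  simp only [hF, Finset.sum_add_distrib, Finset.mul_sum]

lemma lapH_add3 (h : ℝ) (X Y Z : Grid m → ℝ) (p : Grid m) :
    lapH h (fun q => X q + Y q + Z q) p = lapH h X p + lapH h Y p + lapH h Z p := by
  simp only [lapH]; ring

end Exist
section Exist2
set_option linter.unusedSectionVars false
set_option maxHeartbeats 2000000
variable {m : ℕ} [NeZero m]

lemma Dx_lin (h t : ℝ) (f g : Grid m → ℝ) (p : Grid m) :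
    Dx h (fun q => f q + t * g q) p = Dx h f p + t * Dx h g p := by
  simp only [Dx]; ring
lemma Dy_lin (h t : ℝ) (f g : Grid m → ℝ) (p : Grid m) :
    Dy h (fun q => f q + t * g q) p = Dy h f p + t * Dy h g p := by
  simp only [Dy]; ring
lemma Dz_lin (h t : ℝ) (f g : Grid m → ℝ) (p : Grid m) :
    Dz h (fun q => f q + t * g q) p = Dz h f p + t * Dz h g p := by
  simp only [Dz]; ring
lemma lapH_add (h : ℝ) (X Y : Grid m → ℝ) (p : Grid m) :
    lapH h (fun q => X q + Y q) p = lapH h X p + lapH h Y p := by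
  simp only [lapH]; ring

lemma scheme_exists (h τ ε : ℝ) (hh : h ≠ 0) (hτ : 0 < τ) (hε1 : ε < 1)
    (a b : Grid m → ℝ) : ∃ c : Grid m → ℝ, SchemeStep h τ ε a b c := by
  classical
  obtain ⟨lam, hlam, hpoin⟩ := poincare (m := m) h hh
  -- pointwise lower-bound constants
  have hCex : ∀ p : Grid m, ∃ C : ℝ, ∀ x : ℝ, -C ≤ x^4/16 + (b p/12)*x^3
      + ((b p)^2/8 + (1-ε)/4)*x^2
      + ((b p)^3/4 + (1-ε)*(b p)/2 + (3 * lapH h b p - lapH h a p))*x :=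
    fun p => quartic_lb _ _ _
  choose Cp hCspec using hCex
  have hCp0 : ∀ p : Grid m, 0 ≤ Cp p := by
    intro p
    have := hCspec p 0
    norm_num at this
    linarith
  -- lower bound for Kfun
  have lbound : ∀ ψ : Grid m → ℝ,
      -(∑ p : Grid m, Cp p) + (τ/2) * ∑ p : Grid m,
        ((Dx h ψ p)^2 + (Dy h ψ p)^2 + (Dz h ψ p)^2) ≤ Kfun h τ ε a b ψ := by
    intro ψ
    have pt : ∀ p : Grid m, -(Cp p) + (τ/2)*((Dx h ψ p)^2 + (Dy h ψ p)^2 + (Dz h ψ p)^2)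
        ≤ ((b p + τ * lapH h ψ p)^4/16 + b p * (b p + τ * lapH h ψ p)^3/12
          + (b p)^2 * (b p + τ * lapH h ψ p)^2/8 + (b p)^3 * (b p + τ * lapH h ψ p)/4
          + (1-ε) * ((b p + τ * lapH h ψ p)^2/4 + b p * (b p + τ * lapH h ψ p)/2)
          + (1/4) * (lapH h (fun q => (b q + τ * lapH h ψ q) + b q) p)^2
          + (3 * lapH h b p - lapH h a p) * (b p + τ * lapH h ψ p)
          + (τ/2) * ((Dx h ψ p)^2 + (Dy h ψ p)^2 + (Dz h ψ p)^2)) := by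
      intro p
      have h1 := hCspec p (b p + τ * lapH h ψ p)
      have h2 : (0:ℝ) ≤ (1/4) * (lapH h (fun q => (b q + τ * lapH h ψ q) + b q) p)^2 := by
        positivity
      nlinarith [h1, h2]
    have hsum := Finset.sum_le_sum (fun p (_ : p ∈ Finset.univ) => pt p)
    rw [Kfun]
    refine le_trans (le_of_eq ?_) hsum
    have e1 : ∑ p : Grid m, (-(Cp p) + (τ/2)*((Dx h ψ p)^2 + (Dy h ψ p)^2 + (Dz h ψ p)^2))
        = ∑ p : Grid m, -(Cp p)
          + ∑ p : Grid m, (τ/2)*((Dx h ψ p)^2 + (Dy h ψ p)^2 + (Dz h ψ p)^2) :=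
      Finset.sum_add_distrib
    have e2 : ∑ p : Grid m, -(Cp p) = -∑ p : Grid m, Cp p := Finset.sum_neg_distrib _
    have e3 : ∑ p : Grid m, (τ/2)*((Dx h ψ p)^2 + (Dy h ψ p)^2 + (Dz h ψ p)^2)
        = (τ/2) * ∑ p : Grid m, ((Dx h ψ p)^2 + (Dy h ψ p)^2 + (Dz h ψ p)^2) :=
      (Finset.mul_sum _ _ _).symm
    rw [e1, e2, e3]
  -- the closed mean-zero subspace
  have hS_closed : IsClosed {f : Grid m → ℝ | ∑ p : Grid m, f p = 0} :=
    isClosed_eq (continuous_finset_sum _ (fun p _ => continuous_apply p)) continuous_const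
  have hK0 : -(∑ p : Grid m, Cp p) ≤ Kfun h τ ε a b 0 := by
    have := lbound 0
    have hq0 : (0:ℝ) ≤ ∑ p : Grid m, ((Dx h (0 : Grid m → ℝ) p)^2
        + (Dy h (0 : Grid m → ℝ) p)^2 + (Dz h (0 : Grid m → ℝ) p)^2) :=
      Finset.sum_nonneg (fun p _ => by positivity)
    nlinarith [this, hq0]
  obtain ⟨Rad, hRad⟩ : ∃ R : ℝ, R = Real.sqrt ((Kfun h τ ε a b 0 + (∑ p : Grid m, Cp p) + 1)
      * 2 / (τ * lam)) := ⟨_, rfl⟩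
  have hargpos : 0 < (Kfun h τ ε a b 0 + (∑ p : Grid m, Cp p) + 1) * 2 / (τ * lam) := by
    apply div_pos
    · nlinarith [hK0]
    · positivity
  have hRad0 : 0 ≤ Rad := by rw [hRad]; exact Real.sqrt_nonneg _
  have hRad2 : Rad^2 = (Kfun h τ ε a b 0 + (∑ p : Grid m, Cp p) + 1) * 2 / (τ * lam) := by
    rw [hRad, Real.sq_sqrt hargpos.le]
  -- compact set and minimizer
  have hzero_mem : (0 : Grid m → ℝ) ∈ ({f : Grid m → ℝ | ∑ p : Grid m, f p = 0}
      ∩ Metric.closedBall 0 Rad) := by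
    constructor
    · simp
    · simp [Metric.mem_closedBall, hRad0]
  have hcpt : IsCompact ({f : Grid m → ℝ | ∑ p : Grid m, f p = 0}
      ∩ Metric.closedBall 0 Rad) := by
    apply IsCompact.of_isClosed_subset (isCompact_closedBall (0 : Grid m → ℝ) Rad)
      (hS_closed.inter Metric.isClosed_closedBall)
    exact Set.inter_subset_right
  obtain ⟨ψ, hψD, hmin⟩ := hcpt.exists_isMinOn ⟨0, hzero_mem⟩
    (Kfun_continuous h τ ε a b).continuousOn
  have hψS : ∑ p : Grid m, ψ p = 0 := hψD.1
  -- global minimality on the mean-zero subspace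
  have gmin : ∀ φ : Grid m → ℝ, (∑ p : Grid m, φ p = 0) →
      Kfun h τ ε a b ψ ≤ Kfun h τ ε a b φ := by
    intro φ hφ
    by_cases hball : φ ∈ Metric.closedBall (0 : Grid m → ℝ) Rad
    · exact hmin ⟨hφ, hball⟩
    · have hn : Rad < ‖φ‖ := by
        simp only [Metric.mem_closedBall, dist_zero_right, not_le] at hball
        exact hball
      have h1 := lbound φ
      have h2 := hpoin φ hφ
      have h3 : Kfun h τ ε a b ψ ≤ Kfun h τ ε a b 0 := hmin hzero_mem
      have h4 : Rad^2 ≤ ‖φ‖^2 := by nlinarith [hn, hRad0]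
      have h5 : (τ * lam / 2) * Rad^2 = Kfun h τ ε a b 0 + (∑ p : Grid m, Cp p) + 1 := by
        rw [hRad2]
        field_simp
      have h6 : (τ/2) * (lam * ‖φ‖^2) ≤ (τ/2) * ∑ p : Grid m,
          ((Dx h φ p)^2 + (Dy h φ p)^2 + (Dz h φ p)^2) :=
        mul_le_mul_of_nonneg_left h2 (by positivity)
      nlinarith [h1, h3, h4, h5, h6, mul_le_mul_of_nonneg_left h4
        (by positivity : (0:ℝ) ≤ τ * lam / 2)]
  -- expansion of Kfun along a direction
  have expand : ∀ v : Grid m → ℝ, ∃ e2 e3 e4 : ℝ, ∀ t : ℝ,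
      Kfun h τ ε a b (fun p => ψ p + t * v p)
        = Kfun h τ ε a b ψ + t^2 * e2 + t^3 * e3 + t^4 * e4
          + t * ∑ p : Grid m,
            (((b p + τ * lapH h ψ p)^3/4 + b p * (b p + τ * lapH h ψ p)^2/4
              + (b p)^2 * (b p + τ * lapH h ψ p)/4 + (b p)^3/4
              + (1-ε) * ((b p + τ * lapH h ψ p)/2 + b p/2)
              + (3 * lapH h b p - lapH h a p)) * (τ * lapH h v p)
             + (1/2) * lapH h (fun q => (b q + τ * lapH h ψ q) + b q) p
                * (τ * lapH h (lapH h v) p)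
             + τ * (Dx h ψ p * Dx h v p + Dy h ψ p * Dy h v p + Dz h ψ p * Dz h v p)) := by
    intro v
    refine ⟨∑ p : Grid m,
        (6*(b p + τ * lapH h ψ p)^2*(τ * lapH h v p)^2/16
          + 3*(b p)*(b p + τ * lapH h ψ p)*(τ * lapH h v p)^2/12
          + (b p)^2*(τ * lapH h v p)^2/8 + (1-ε)*(τ * lapH h v p)^2/4
          + (1/4)*(τ * lapH h (lapH h v) p)^2
          + (τ/2)*((Dx h v p)^2 + (Dy h v p)^2 + (Dz h v p)^2)),
      ∑ p : Grid m,
        (4*(b p + τ * lapH h ψ p)*(τ * lapH h v p)^3/16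
          + (b p)*(τ * lapH h v p)^3/12),
      ∑ p : Grid m, (τ * lapH h v p)^4/16, fun t => ?_⟩
    have point : ∀ (t : ℝ) (p : Grid m),
        ((b p + τ * lapH h (fun q => ψ q + t * v q) p)^4/16
          + b p * (b p + τ * lapH h (fun q => ψ q + t * v q) p)^3/12
          + (b p)^2 * (b p + τ * lapH h (fun q => ψ q + t * v q) p)^2/8
          + (b p)^3 * (b p + τ * lapH h (fun q => ψ q + t * v q) p)/4
          + (1-ε) * ((b p + τ * lapH h (fun q => ψ q + t * v q) p)^2/4
              + b p * (b p + τ * lapH h (fun q => ψ q + t * v q) p)/2)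
          + (1/4) * (lapH h (fun q => (b q + τ * lapH h (fun r => ψ r + t * v r) q) + b q) p)^2
          + (3 * lapH h b p - lapH h a p) * (b p + τ * lapH h (fun q => ψ q + t * v q) p)
          + (τ/2) * ((Dx h (fun q => ψ q + t * v q) p)^2
              + (Dy h (fun q => ψ q + t * v q) p)^2 + (Dz h (fun q => ψ q + t * v q) p)^2))
        = ((b p + τ * lapH h ψ p)^4/16 + b p * (b p + τ * lapH h ψ p)^3/12
            + (b p)^2 * (b p + τ * lapH h ψ p)^2/8 + (b p)^3 * (b p + τ * lapH h ψ p)/4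
            + (1-ε) * ((b p + τ * lapH h ψ p)^2/4 + b p * (b p + τ * lapH h ψ p)/2)
            + (1/4) * (lapH h (fun q => (b q + τ * lapH h ψ q) + b q) p)^2
            + (3 * lapH h b p - lapH h a p) * (b p + τ * lapH h ψ p)
            + (τ/2) * ((Dx h ψ p)^2 + (Dy h ψ p)^2 + (Dz h ψ p)^2))
          + t * (((b p + τ * lapH h ψ p)^3/4 + b p * (b p + τ * lapH h ψ p)^2/4
              + (b p)^2 * (b p + τ * lapH h ψ p)/4 + (b p)^3/4
              + (1-ε) * ((b p + τ * lapH h ψ p)/2 + b p/2)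
              + (3 * lapH h b p - lapH h a p)) * (τ * lapH h v p)
             + (1/2) * lapH h (fun q => (b q + τ * lapH h ψ q) + b q) p
                * (τ * lapH h (lapH h v) p)
             + τ * (Dx h ψ p * Dx h v p + Dy h ψ p * Dy h v p + Dz h ψ p * Dz h v p))
          + t^2 * (6*(b p + τ * lapH h ψ p)^2*(τ * lapH h v p)^2/16
              + 3*(b p)*(b p + τ * lapH h ψ p)*(τ * lapH h v p)^2/12
              + (b p)^2*(τ * lapH h v p)^2/8 + (1-ε)*(τ * lapH h v p)^2/4
              + (1/4)*(τ * lapH h (lapH h v) p)^2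
              + (τ/2)*((Dx h v p)^2 + (Dy h v p)^2 + (Dz h v p)^2))
          + t^3 * (4*(b p + τ * lapH h ψ p)*(τ * lapH h v p)^3/16
              + (b p)*(τ * lapH h v p)^3/12)
          + t^4 * ((τ * lapH h v p)^4/16) := by
      intro t p
      have hin : (fun q => (b q + τ * lapH h (fun r => ψ r + t * v r) q) + b q)
          = (fun q => ((b q + τ * lapH h ψ q) + b q) + t * (τ * lapH h v q)) := by
        funext q
        rw [lapH_lin]
        ring
      rw [hin, lapH_lin h t ψ v p,
        lapH_lin h t (fun q => (b q + τ * lapH h ψ q) + b q) (fun q => τ * lapH h v q) p,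
        lapH_smul h τ (lapH h v) p, Dx_lin, Dy_lin, Dz_lin]
      ring
    simp only [Kfun]
    exact (sum_quartic_poly _ _ _ _ _ _ point t).trans (by ring)

  -- identification of the first-order coefficient
  have ident : ∀ v : Grid m → ℝ,
      ∑ p : Grid m,
        (((b p + τ * lapH h ψ p)^3/4 + b p * (b p + τ * lapH h ψ p)^2/4
              + (b p)^2 * (b p + τ * lapH h ψ p)/4 + (b p)^3/4
              + (1-ε) * ((b p + τ * lapH h ψ p)/2 + b p/2)
              + (3 * lapH h b p - lapH h a p)) * (τ * lapH h v p)
             + (1/2) * lapH h (fun q => (b q + τ * lapH h ψ q) + b q) p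
                * (τ * lapH h (lapH h v) p)
             + τ * (Dx h ψ p * Dx h v p + Dy h ψ p * Dy h v p + Dz h ψ p * Dz h v p))
      = τ * ∑ p : Grid m, ((lapH h (mu h ε a b (fun r => b r + τ * lapH h ψ r)) p - lapH h ψ p) * v p) := by
    intro v
    have hmu : mu h ε a b (fun r => b r + τ * lapH h ψ r) = fun p =>
        ((b p + τ * lapH h ψ p)^3/4 + b p * (b p + τ * lapH h ψ p)^2/4
              + (b p)^2 * (b p + τ * lapH h ψ p)/4 + (b p)^3/4
              + (1-ε) * ((b p + τ * lapH h ψ p)/2 + b p/2)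
              + (3 * lapH h b p - lapH h a p))
        + lapH h (fun q => (1/2) * lapH h (fun r => (b r + τ * lapH h ψ r) + b r) q) p := by
      funext p
      simp only [mu]
      ring
    have hlapmu : ∀ p : Grid m, lapH h (mu h ε a b (fun r => b r + τ * lapH h ψ r)) p
        = lapH h (fun r => ((b r + τ * lapH h ψ r)^3/4 + b r * (b r + τ * lapH h ψ r)^2/4
              + (b r)^2 * (b r + τ * lapH h ψ r)/4 + (b r)^3/4
              + (1-ε) * ((b r + τ * lapH h ψ r)/2 + b r/2)
              + (3 * lapH h b r - lapH h a r))) p + lapH h (lapH h (fun q => (1/2) * lapH h (fun r => (b r + τ * lapH h ψ r) + b r) q)) p := by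
      intro p
      rw [hmu]
      exact lapH_add h _ _ p
    have E1 : ∑ p : Grid m, ((b p + τ * lapH h ψ p)^3/4 + b p * (b p + τ * lapH h ψ p)^2/4
              + (b p)^2 * (b p + τ * lapH h ψ p)/4 + (b p)^3/4
              + (1-ε) * ((b p + τ * lapH h ψ p)/2 + b p/2)
              + (3 * lapH h b p - lapH h a p)) * lapH h v p
        = ∑ p : Grid m, lapH h (fun r => ((b r + τ * lapH h ψ r)^3/4 + b r * (b r + τ * lapH h ψ r)^2/4
              + (b r)^2 * (b r + τ * lapH h ψ r)/4 + (b r)^3/4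
              + (1-ε) * ((b r + τ * lapH h ψ r)/2 + b r/2)
              + (3 * lapH h b r - lapH h a r))) p * v p :=
      (lap_selfadj h (fun r => ((b r + τ * lapH h ψ r)^3/4 + b r * (b r + τ * lapH h ψ r)^2/4
              + (b r)^2 * (b r + τ * lapH h ψ r)/4 + (b r)^3/4
              + (1-ε) * ((b r + τ * lapH h ψ r)/2 + b r/2)
              + (3 * lapH h b r - lapH h a r))) v).symm
    have E2a : ∑ p : Grid m, ((1/2) * lapH h (fun r => (b r + τ * lapH h ψ r) + b r) p)
          * lapH h (lapH h v) p
        = ∑ p : Grid m, lapH h (fun q => (1/2) * lapH h (fun r => (b r + τ * lapH h ψ r) + b r) q) p * lapH h v p :=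
      (lap_selfadj h (fun q => (1/2) * lapH h (fun r => (b r + τ * lapH h ψ r) + b r) q) (lapH h v)).symm
    have E2b : ∑ p : Grid m, lapH h (fun q => (1/2) * lapH h (fun r => (b r + τ * lapH h ψ r) + b r) q) p * lapH h v p
        = ∑ p : Grid m, lapH h (lapH h (fun q => (1/2) * lapH h (fun r => (b r + τ * lapH h ψ r) + b r) q)) p * v p :=
      (lap_selfadj h (lapH h (fun q => (1/2) * lapH h (fun r => (b r + τ * lapH h ψ r) + b r) q)) v).symm
    have E4 : ∑ p : Grid m, (Dx h ψ p * Dx h v p + Dy h ψ p * Dy h v p + Dz h ψ p * Dz h v p)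
        = - ∑ p : Grid m, lapH h ψ p * v p := gradsum_eq h ψ v
    have split : ∑ p : Grid m,
        (((b p + τ * lapH h ψ p)^3/4 + b p * (b p + τ * lapH h ψ p)^2/4
              + (b p)^2 * (b p + τ * lapH h ψ p)/4 + (b p)^3/4
              + (1-ε) * ((b p + τ * lapH h ψ p)/2 + b p/2)
              + (3 * lapH h b p - lapH h a p)) * (τ * lapH h v p)
             + (1/2) * lapH h (fun q => (b q + τ * lapH h ψ q) + b q) p
                * (τ * lapH h (lapH h v) p)
             + τ * (Dx h ψ p * Dx h v p + Dy h ψ p * Dy h v p + Dz h ψ p * Dz h v p))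
        = τ * ∑ p : Grid m, ((b p + τ * lapH h ψ p)^3/4 + b p * (b p + τ * lapH h ψ p)^2/4
              + (b p)^2 * (b p + τ * lapH h ψ p)/4 + (b p)^3/4
              + (1-ε) * ((b p + τ * lapH h ψ p)/2 + b p/2)
              + (3 * lapH h b p - lapH h a p)) * lapH h v p
          + τ * ∑ p : Grid m, ((1/2) * lapH h (fun r => (b r + τ * lapH h ψ r) + b r) p)
              * lapH h (lapH h v) p
          + τ * ∑ p : Grid m, (Dx h ψ p * Dx h v p + Dy h ψ p * Dy h v p + Dz h ψ p * Dz h v p) := by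
      rw [Finset.mul_sum, Finset.mul_sum, Finset.mul_sum, ← Finset.sum_add_distrib,
        ← Finset.sum_add_distrib]
      exact Finset.sum_congr rfl (fun p _ => by ring)
    have hr : ∑ p : Grid m, ((lapH h (mu h ε a b (fun r => b r + τ * lapH h ψ r)) p - lapH h ψ p) * v p)
        = ∑ p : Grid m, lapH h (fun r => ((b r + τ * lapH h ψ r)^3/4 + b r * (b r + τ * lapH h ψ r)^2/4
              + (b r)^2 * (b r + τ * lapH h ψ r)/4 + (b r)^3/4
              + (1-ε) * ((b r + τ * lapH h ψ r)/2 + b r/2)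
              + (3 * lapH h b r - lapH h a r))) p * v p
          + ∑ p : Grid m, lapH h (lapH h (fun q => (1/2) * lapH h (fun r => (b r + τ * lapH h ψ r) + b r) q)) p * v p
          - ∑ p : Grid m, lapH h ψ p * v p := by
      rw [← Finset.sum_add_distrib, ← Finset.sum_sub_distrib]
      exact Finset.sum_congr rfl (fun p _ => by rw [hlapmu p]; ring)
    rw [split, E1, E2a, E2b, E4, hr]
    ring
  -- Euler-Lagrange equation
  have EL : ∀ v : Grid m → ℝ, (∑ p : Grid m, v p = 0) →
      ∑ p : Grid m, ((lapH h (mu h ε a b (fun r => b r + τ * lapH h ψ r)) p - lapH h ψ p) * v p) = 0 := by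
    intro v hv
    obtain ⟨e2, e3, e4, hexp⟩ := expand v
    have H : ∀ t : ℝ, 0 ≤ (∑ p : Grid m,
        (((b p + τ * lapH h ψ p)^3/4 + b p * (b p + τ * lapH h ψ p)^2/4
              + (b p)^2 * (b p + τ * lapH h ψ p)/4 + (b p)^3/4
              + (1-ε) * ((b p + τ * lapH h ψ p)/2 + b p/2)
              + (3 * lapH h b p - lapH h a p)) * (τ * lapH h v p)
             + (1/2) * lapH h (fun q => (b q + τ * lapH h ψ q) + b q) p
                * (τ * lapH h (lapH h v) p)
             + τ * (Dx h ψ p * Dx h v p + Dy h ψ p * Dy h v p + Dz h ψ p * Dz h v p))) * t + e2 * t^2 + e3 * t^3 + e4 * t^4 := by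
      intro t
      have hmem : ∑ p : Grid m, (ψ p + t * v p) = 0 := by
        rw [Finset.sum_add_distrib, ← Finset.mul_sum, hψS, hv]
        ring
      have h1 := gmin (fun p => ψ p + t * v p) hmem
      rw [hexp t] at h1
      nlinarith [h1]
    have hzero := coeff_eq_zero _ e2 e3 e4 H
    have h2 := ident v
    rw [hzero] at h2
    have h3 : τ * ∑ p : Grid m, ((lapH h (mu h ε a b (fun r => b r + τ * lapH h ψ r)) p - lapH h ψ p) * v p) = 0 := h2.symm
    rcases mul_eq_zero.1 h3 with hc | hc
    · exact absurd hc (ne_of_gt hτ)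
    · exact hc
  have hG0 : ∑ p : Grid m, (lapH h (mu h ε a b (fun r => b r + τ * lapH h ψ r)) p - lapH h ψ p) = 0 := by
    rw [Finset.sum_sub_distrib, sum_lap, sum_lap]
    ring
  have hGpt : ∀ q : Grid m, lapH h (mu h ε a b (fun r => b r + τ * lapH h ψ r)) q = lapH h ψ q := by
    intro q
    have hcard : (0:ℝ) < (Fintype.card (Grid m) : ℝ) := by
      exact_mod_cast Fintype.card_pos
    have hv : ∑ p : Grid m, ((if p = q then (1:ℝ) else 0) - (Fintype.card (Grid m):ℝ)⁻¹) = 0 := by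
      rw [Finset.sum_sub_distrib, Finset.sum_const, Finset.card_univ]
      rw [Finset.sum_ite_eq' Finset.univ q (fun _ => (1:ℝ))]
      simp [Finset.mem_univ, nsmul_eq_mul]
      have hm : ((m:ℝ)) ≠ 0 := Nat.cast_ne_zero.2 (NeZero.ne m)
      field_simp
      ring
    have h5 := EL (fun p => (if p = q then (1:ℝ) else 0) - (Fintype.card (Grid m):ℝ)⁻¹) hv
    have h6 : ∑ p : Grid m, ((lapH h (mu h ε a b (fun r => b r + τ * lapH h ψ r)) p - lapH h ψ p)
          * ((if p = q then (1:ℝ) else 0) - (Fintype.card (Grid m):ℝ)⁻¹))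
        = ∑ p : Grid m, ((lapH h (mu h ε a b (fun r => b r + τ * lapH h ψ r)) p - lapH h ψ p) * (if p = q then (1:ℝ) else 0))
          - (Fintype.card (Grid m):ℝ)⁻¹ * ∑ p : Grid m, (lapH h (mu h ε a b (fun r => b r + τ * lapH h ψ r)) p - lapH h ψ p) := by
      rw [Finset.mul_sum, ← Finset.sum_sub_distrib]
      exact Finset.sum_congr rfl (fun p _ => by ring)
    have h7 : ∑ p : Grid m, ((lapH h (mu h ε a b (fun r => b r + τ * lapH h ψ r)) p - lapH h ψ p) * (if p = q then (1:ℝ) else 0))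
        = lapH h (mu h ε a b (fun r => b r + τ * lapH h ψ r)) q - lapH h ψ q := by
      simp [mul_ite, mul_one, mul_zero, Finset.sum_ite_eq']
    rw [h6, h7, hG0] at h5
    simp at h5
    linarith [h5]
  refine ⟨fun r => b r + τ * lapH h ψ r, ?_⟩
  intro p
  show (b p + τ * lapH h ψ p - b p)/τ = lapH h (mu h ε a b (fun r => b r + τ * lapH h ψ r)) p
  rw [hGpt p]
  field_simp
  ring

end Exist2
/-- Unique solvability of the second-order PFC scheme. -/
theorem stmt5 (L : ℝ) (hL : 0 < L) (m : ℕ) [NeZero m] (h : ℝ) (hh : h = L / m)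
    (ε : ℝ) (hε : 0 < ε) (hε1 : ε < 1) (τ : ℝ) (hτ : 0 < τ)
    (φa φb : Grid m → ℝ) :
    ∃! φc : Grid m → ℝ, SchemeStep h τ ε φa φb φc := by
  have hm : (0:ℝ) < (m:ℝ) := by
    exact_mod_cast Nat.pos_of_ne_zero (NeZero.ne m)
  have hh0 : h ≠ 0 := by
    rw [hh]
    exact ne_of_gt (div_pos hL hm)
  obtain ⟨c, hc⟩ := scheme_exists h τ ε hh0 hτ hε1 φa φb
  exact ⟨c, hc, fun y hy => scheme_unique h τ ε hτ hε1 φa φb y c hy hc⟩
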